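/- Let F be a fixed k-uniform hypergraph with |V(F)| > k and let q ≤ |E(F)| be a positive integer. There exists a constant C = C(F, q, k) such that for every k-uniform hypergraph G on n vertices, the generalized list Ramsey number satisfies r_ℓ(G, F, q) ≤ C · n^{(|V(F)|-k)/(|E(F)|-q+1)}. -/

import Mathlib

open Finset

section LLLModule

variable {I : Type*} [Fintype I] [DecidableEq I]

def mergeFn (T : Finset I) (a b : I → ℕ) : I → ℕ := fun i => if i ∈ T then a i else b i

lemma mergeFn_mem {L : I → Finset ℕ} {T : Finset I} {a b : I → ℕ}
    (ha : a ∈ Fintype.piFinset L) (hb : b ∈ Fintype.piFinset L) :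
    mergeFn T a b ∈ Fintype.piFinset L := by
  rw [Fintype.mem_piFinset] at *
  intro i
  unfold mergeFn
  split <;> [exact ha i; exact hb i]

lemma indep_counting (L : I → Finset ℕ) (T : Finset I)
    (A B : (I → ℕ) → Prop) [DecidablePred A] [DecidablePred B]
    (hA : ∀ a b, (∀ i ∈ T, a i = b i) → (A a ↔ A b))
    (hB : ∀ a b, (∀ i ∉ T, a i = b i) → (B a ↔ B b)) :
    ((Fintype.piFinset L).filter (fun ω => A ω ∧ B ω)).card * (Fintype.piFinset L).card
      = ((Fintype.piFinset L).filter A).card * ((Fintype.piFinset L).filter B).card := by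
  rw [← card_product, ← card_product]
  apply Finset.card_bij' (fun x _ => (mergeFn T x.1 x.2, mergeFn T x.2 x.1))
    (fun x _ => (mergeFn T x.1 x.2, mergeFn T x.2 x.1))
  · rintro ⟨c, d⟩ h
    simp only [mem_product, mem_filter] at h ⊢
    obtain ⟨⟨hc, hAc, hBc⟩, hd⟩ := h
    refine ⟨⟨mergeFn_mem hc hd, ?_⟩, mergeFn_mem hd hc, ?_⟩
    · exact (hA _ c (fun i hi => by simp [mergeFn, hi])).2 hAc
    · exact (hB _ c (fun i hi => by simp [mergeFn, hi])).2 hBc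
  · rintro ⟨a, b⟩ h
    simp only [mem_product, mem_filter] at h ⊢
    obtain ⟨⟨ha, hAa⟩, hb, hBb⟩ := h
    refine ⟨⟨mergeFn_mem ha hb, ?_, ?_⟩, mergeFn_mem hb ha⟩
    · exact (hA _ a (fun i hi => by simp [mergeFn, hi])).2 hAa
    · exact (hB _ b (fun i hi => by simp [mergeFn, hi])).2 hBb
  · rintro ⟨c, d⟩ _
    ext i <;> simp [mergeFn] <;> split <;> rfl
  · rintro ⟨a, b⟩ _
    ext i <;> simp [mergeFn] <;> split <;> rfl

/-- The symmetric Lovász Local Lemma, counting version, over a finite product space. -/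
lemma lll {J : Type*} [Fintype J] [DecidableEq J]
    (L : I → Finset ℕ) (P : J → (I → ℕ) → Prop) [∀ j, DecidablePred (P j)]
    (supp : J → Finset I)
    (hdep : ∀ j a b, (∀ i ∈ supp j, a i = b i) → (P j a ↔ P j b))
    (hL : ∀ i, (L i).Nonempty) (p D : ℝ) (hp0 : 0 ≤ p) (hD1 : 1 ≤ D)
    (hp : ∀ j, (((Fintype.piFinset L).filter (P j)).card : ℝ)
        ≤ p * (Fintype.piFinset L).card)
    (hnb : ∀ j, ((univ.filter (fun j' : J => ¬ Disjoint (supp j) (supp j'))).card : ℝ) ≤ D)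
    (hcond : 4 * p * D ≤ 1) :
    ∃ ω ∈ Fintype.piFinset L, ∀ j, ¬ P j ω := by
  classical
  set Ω := Fintype.piFinset L with hΩ
  have hΩne : Ω.Nonempty := by
    obtain ⟨g, hg⟩ := Classical.axiom_of_choice (fun i => hL i)
    exact ⟨g, by rw [hΩ, Fintype.mem_piFinset]; exact hg⟩
  have hΩpos : (0:ℝ) < Ω.card := by exact_mod_cast card_pos.2 hΩne
  set Good : Finset J → Finset (I → ℕ) := fun S => Ω.filter (fun ω => ∀ j ∈ S, ¬ P j ω)
    with hGood
  have hp2 : 2 * p ≤ 1 / 2 := by nlinarith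
  -- main induction
  have key : ∀ N : ℕ, ∀ S : Finset J, S.card ≤ N → ∀ j : J,
      (((Good S).filter (P j)).card : ℝ) ≤ 2 * p * (Good S).card := by
    intro N
    induction N with
    | zero =>
      intro S hS j
      have hS0 : S = ∅ := Finset.card_eq_zero.mp (Nat.le_zero.mp hS)
      subst hS0
      have h1 : Good ∅ = Ω := by simp [hGood]
      rw [h1]
      calc ((Ω.filter (P j)).card : ℝ) ≤ p * Ω.card := hp j
        _ ≤ 2 * p * Ω.card := by nlinarith
    | succ N ih =>
      intro S hS j
      set S1 := S.filter (fun j' => ¬ Disjoint (supp j) (supp j')) with hS1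
      set S2 := S \ S1 with hS2
      have hdisj : ∀ j' ∈ S2, Disjoint (supp j) (supp j') := by
        intro j' hj'
        rw [hS2, mem_sdiff, hS1, mem_filter] at hj'
        by_contra hcon
        exact hj'.2 ⟨hj'.1, hcon⟩
      -- independence step on S2
      have hBdep : ∀ a b : I → ℕ, (∀ i ∉ supp j, a i = b i) →
          ((∀ j' ∈ S2, ¬ P j' a) ↔ (∀ j' ∈ S2, ¬ P j' b)) := by
        intro a b hab
        have hiff : ∀ j' ∈ S2, (P j' a ↔ P j' b) := by
          intro j' hj'
          apply hdep j' a b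
          intro i hi
          apply hab
          exact fun hin => (Finset.disjoint_right.1 (hdisj j' hj') hi) hin
        constructor <;> intro h j' hj'
        · exact fun hb => h j' hj' ((hiff j' hj').2 hb)
        · exact fun ha => h j' hj' ((hiff j' hj').1 ha)
      have hindep : (((Good S2).filter (P j)).card : ℝ) ≤ p * (Good S2).card := by
        have heq := indep_counting L (supp j) (P j) (fun ω => ∀ j' ∈ S2, ¬ P j' ω)
          (hdep j) hBdep
        have h1 : (Good S2).filter (P j) = Ω.filter (fun ω => P j ω ∧ ∀ j' ∈ S2, ¬ P j' ω) := by
          rw [hGood]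
          simp only [filter_filter]
          apply filter_congr
          intro x _
          tauto
        have h2 : Good S2 = Ω.filter (fun ω => ∀ j' ∈ S2, ¬ P j' ω) := rfl
        rw [h1, h2]
        have := hp j
        rw [← mul_le_mul_iff_of_pos_right hΩpos]
        calc ((Ω.filter (fun ω => P j ω ∧ ∀ j' ∈ S2, ¬ P j' ω)).card : ℝ) * Ω.card
            = (Ω.filter (P j)).card * (Ω.filter (fun ω => ∀ j' ∈ S2, ¬ P j' ω)).card := by
              exact_mod_cast congrArg Nat.cast heq
          _ ≤ p * Ω.card * (Ω.filter (fun ω => ∀ j' ∈ S2, ¬ P j' ω)).card := by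
              apply mul_le_mul_of_nonneg_right (hp j) (by positivity)
          _ = p * (Ω.filter (fun ω => ∀ j' ∈ S2, ¬ P j' ω)).card * Ω.card := by ring
      by_cases hS1e : S1 = ∅
      · have : S2 = S := by rw [hS2, hS1e, sdiff_empty]
        rw [this] at hindep
        calc (((Good S).filter (P j)).card : ℝ) ≤ p * (Good S).card := hindep
          _ ≤ 2 * p * (Good S).card := by nlinarith [(Good S).card.cast_nonneg (α := ℝ)]
      · -- S1 nonempty
        have hS1ne : S1.Nonempty := nonempty_iff_ne_empty.2 hS1e
        have hS2lt : S2.card < S.card := by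
          apply card_lt_card
          rw [hS2]
          constructor
          · exact sdiff_subset
          · intro hsub
            obtain ⟨j', hj'⟩ := hS1ne
            have hj'S : j' ∈ S := (mem_filter.1 hj').1
            have := hsub hj'S
            rw [mem_sdiff] at this
            exact this.2 hj'
        have hS2le : S2.card ≤ N := by omega
        -- Good S2 \ Good S covered by bad events from S1
        have hGS : Good S ⊆ Good S2 := by
          intro ω hω
          simp only [hGood, mem_filter] at hω ⊢
          exact ⟨hω.1, fun j' hj' => hω.2 j' (mem_sdiff.1 hj').1⟩
        have hcover : Good S2 \ Good S ⊆ S1.biUnion (fun j' => (Good S2).filter (P j')) := by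
          intro ω hω
          rw [mem_sdiff] at hω
          obtain ⟨hω2, hωn⟩ := hω
          rw [hGood, mem_filter] at hωn
          push_neg at hωn
          have hωΩ : ω ∈ Ω := (mem_filter.1 hω2).1
          obtain ⟨j', hj'S, hPj'⟩ := hωn hωΩ
          rw [mem_biUnion]
          refine ⟨j', ?_, mem_filter.2 ⟨hω2, hPj'⟩⟩
          by_contra hj'nS1
          have hj'S2 : j' ∈ S2 := mem_sdiff.2 ⟨hj'S, hj'nS1⟩
          exact (mem_filter.1 hω2).2 j' hj'S2 hPj'
        have hS1card : (S1.card : ℝ) ≤ D := by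
          have : S1 ⊆ univ.filter (fun j' : J => ¬ Disjoint (supp j) (supp j')) := by
            intro x hx
            rw [mem_filter] at hx ⊢
            exact ⟨mem_univ x, hx.2⟩
          calc (S1.card : ℝ) ≤ _ := by exact_mod_cast card_le_card this
            _ ≤ D := hnb j
        have hlow : ((Good S2).card : ℝ) / 2 ≤ (Good S).card := by
          have hdiff : ((Good S2).card : ℝ) - (Good S).card
              ≤ 2 * p * D * (Good S2).card := by
            have h1 : (Good S2 \ Good S).card ≤
                ∑ j' ∈ S1, ((Good S2).filter (P j')).card := by
              calc (Good S2 \ Good S).card ≤ _ := card_le_card hcover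
                _ ≤ _ := card_biUnion_le
            have h2 : ((Good S2 \ Good S).card : ℝ) ≥ (Good S2).card - (Good S).card := by
              rw [card_sdiff_of_subset hGS]
              have := card_le_card hGS
              push_cast [Nat.cast_sub this]
              linarith
            have h3 : (∑ j' ∈ S1, (((Good S2).filter (P j')).card : ℝ))
                ≤ S1.card * (2 * p * (Good S2).card) := by
              rw [← nsmul_eq_mul]
              apply Finset.sum_le_card_nsmul
              intro j' _
              exact ih S2 hS2le j'
            calc ((Good S2).card : ℝ) - (Good S).card ≤ (Good S2 \ Good S).card := by
                  linarith
              _ ≤ ∑ j' ∈ S1, (((Good S2).filter (P j')).card : ℝ) := by exact_mod_cast h1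
              _ ≤ S1.card * (2 * p * (Good S2).card) := h3
              _ ≤ D * (2 * p * (Good S2).card) := by
                  apply mul_le_mul_of_nonneg_right hS1card
                  positivity
              _ = 2 * p * D * (Good S2).card := by ring
          have h4 : 2 * p * D * ((Good S2).card : ℝ) ≤ (1/2) * (Good S2).card := by
            apply mul_le_mul_of_nonneg_right _ (Nat.cast_nonneg _)
            nlinarith
          linarith
        calc (((Good S).filter (P j)).card : ℝ)
            ≤ ((Good S2).filter (P j)).card := by
              exact_mod_cast card_le_card (filter_subset_filter _ hGS)
          _ ≤ p * (Good S2).card := hindep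
          _ ≤ p * (2 * (Good S).card) := by
              apply mul_le_mul_of_nonneg_left _ hp0
              linarith
          _ = 2 * p * (Good S).card := by ring
  -- positivity of Good S for all S
  have pos : ∀ S : Finset J, (0:ℝ) < (Good S).card := by
    intro S
    induction S using Finset.induction_on with
    | empty => simpa [hGood] using hΩpos
    | @insert j S hjS ihS =>
      have hsplit : (Good (insert j S)).card + ((Good S).filter (P j)).card
          = (Good S).card := by
        have h1 : Good (insert j S) = (Good S).filter (fun ω => ¬ P j ω) := by
          rw [hGood]
          simp only [filter_filter]
          apply filter_congr
          intro x _
          simp only [mem_insert]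
          constructor
          · intro h; exact ⟨fun j' hj' => h j' (Or.inr hj'), h j (Or.inl rfl)⟩
          · rintro ⟨h, hj⟩ j' (rfl | hj')
            · exact hj
            · exact h j' hj'
        rw [h1, add_comm]
        exact card_filter_add_card_filter_not (fun ω => P j ω)
      have hb := key S.card S le_rfl j
      have : ((Good S).card : ℝ) - 2 * p * (Good S).card ≤ (Good (insert j S)).card := by
        have : ((Good (insert j S)).card : ℝ) = (Good S).card - ((Good S).filter (P j)).card := by
          have := congrArg (Nat.cast : ℕ → ℝ) hsplit
          push_cast at this
          linarith
        linarith
      nlinarith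
  have := pos univ
  have hne : (Good univ).Nonempty := card_pos.1 (by exact_mod_cast this)
  obtain ⟨ω, hω⟩ := hne
  rw [hGood, mem_filter] at hω
  exact ⟨ω, hω.1, fun j => hω.2 j (mem_univ j)⟩

lemma constrained_count (L : I → Finset ℕ) (t : ℕ) (hL : ∀ i, t ≤ (L i).card)
    (Dset : Finset I) (σ : I → I) (hσ : ∀ i ∈ Dset, σ i ∉ Dset) :
    ((Fintype.piFinset L).filter (fun ω => ∀ i ∈ Dset, ω i = ω (σ i))).card * t ^ Dset.card
      ≤ (Fintype.piFinset L).card := by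
  classical
  set B : I → Finset ℕ := fun i => if i ∈ Dset then L i else {0} with hB
  have hBcard : t ^ Dset.card ≤ (Fintype.piFinset B).card := by
    rw [Fintype.card_piFinset]
    calc t ^ Dset.card = ∏ i ∈ Dset, t := by rw [prod_const]
      _ ≤ ∏ i ∈ Dset, (L i).card := prod_le_prod' (fun i _ => hL i)
      _ = ∏ i ∈ Dset, (B i).card := by
          apply prod_congr rfl; intro i hi; rw [hB]; simp [hi]
      _ ≤ ∏ i : I, (B i).card := by
          apply prod_le_prod_of_subset_of_one_le' (subset_univ Dset)
          intro i _ hi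
          rw [hB]; simp [hi]
  calc ((Fintype.piFinset L).filter (fun ω => ∀ i ∈ Dset, ω i = ω (σ i))).card * t ^ Dset.card
      ≤ ((Fintype.piFinset L).filter (fun ω => ∀ i ∈ Dset, ω i = ω (σ i))).card
        * (Fintype.piFinset B).card := Nat.mul_le_mul_left _ hBcard
    _ = (((Fintype.piFinset L).filter (fun ω => ∀ i ∈ Dset, ω i = ω (σ i)))
        ×ˢ (Fintype.piFinset B)).card := (card_product _ _).symm
    _ ≤ (Fintype.piFinset L).card := by
        apply Finset.card_le_card_of_injOn (fun x => fun i => if i ∈ Dset then x.2 i else x.1 i)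
        · rintro ⟨ω, v⟩ hx
          rw [mem_coe, mem_product, mem_filter] at hx
          obtain ⟨⟨hω, _⟩, hv⟩ := hx
          rw [mem_coe]
          rw [Fintype.mem_piFinset] at *
          intro i
          dsimp only
          split
          · next hi => have := hv i; rw [hB] at this; simpa [hi] using this
          · exact hω i
        · rintro ⟨ω, v⟩ hx ⟨ω', v'⟩ hx' heq
          simp only [coe_product, Set.mem_prod, mem_coe, mem_filter] at hx hx'
          obtain ⟨⟨hω, hc⟩, hv⟩ := hx
          obtain ⟨⟨hω', hc'⟩, hv'⟩ := hx'
          have hfun : ∀ i, (if i ∈ Dset then v i else ω i) = (if i ∈ Dset then v' i else ω' i) :=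
            fun i => congrFun heq i
          have hveq : v = v' := by
            funext i
            by_cases hi : i ∈ Dset
            · have := hfun i; simpa [hi] using this
            · rw [Fintype.mem_piFinset] at hv hv'
              have h1 := hv i; have h2 := hv' i
              rw [hB] at h1 h2
              simp only [hi, if_neg, if_false] at h1 h2
              simp only [mem_singleton] at h1 h2
              rw [h1, h2]
          have hωeq : ω = ω' := by
            funext i
            by_cases hi : i ∈ Dset
            · have h1 : ω i = ω (σ i) := hc i hi
              have h2 : ω' i = ω' (σ i) := hc' i hi
              have h3 := hfun (σ i)
              simp only [hσ i hi, if_neg, if_false] at h3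
              rw [h1, h2, h3]
            · have := hfun i; simpa [hi] using this
          rw [hveq, hωeq]


omit [Fintype I] in
lemma exists_section (s : Finset I) (g : I → ℕ) :
    ∃ R ⊆ s, R.card ≤ (s.image g).card ∧ ∀ i ∈ s, ∃ r ∈ R, g r = g i := by
  classical
  induction s using Finset.induction_on with
  | empty => exact ⟨∅, Subset.rfl, by simp⟩
  | @insert a s has ih =>
    obtain ⟨R, hRs, hRcard, hRrep⟩ := ih
    by_cases hg : g a ∈ s.image g
    · refine ⟨R, hRs.trans (subset_insert a s), ?_, ?_⟩
      · calc R.card ≤ (s.image g).card := hRcard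
          _ ≤ ((insert a s).image g).card := card_le_card (image_subset_image (subset_insert a s))
      · intro i hi
        rcases mem_insert.1 hi with rfl | hi'
        · obtain ⟨b, hb, hgb⟩ := mem_image.1 hg
          obtain ⟨r, hr, hgr⟩ := hRrep b hb
          exact ⟨r, hr, by rw [hgr, hgb]⟩
        · exact hRrep i hi'
    · refine ⟨insert a R, insert_subset_insert a hRs, ?_, ?_⟩
      · rw [image_insert]
        rw [card_insert_of_notMem hg]
        calc (insert a R).card ≤ R.card + 1 := card_insert_le a R
          _ ≤ (s.image g).card + 1 := by omega
      · intro i hi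
        rcases mem_insert.1 hi with rfl | hi'
        · exact ⟨_, mem_insert_self _ R, rfl⟩
        · obtain ⟨r, hr, hgr⟩ := hRrep i hi'
          exact ⟨r, mem_insert_of_mem hr, hgr⟩


lemma bad_count (L : I → Finset ℕ) (t : ℕ) (hL : ∀ i, t ≤ (L i).card)
    (s : Finset I) (q : ℕ) (hq : 1 ≤ q) (hqE : q ≤ s.card) :
    ((Fintype.piFinset L).filter (fun ω => (s.image ω).card ≤ q - 1)).card
        * t ^ (s.card - (q - 1))
      ≤ 2 ^ s.card * (q - 1) ^ (s.card - (q - 1)) * (Fintype.piFinset L).card := by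
  classical
  set m := s.card - (q - 1) with hm
  set Ω := Fintype.piFinset L with hΩ
  set Bfam : Finset I → I → Finset I := fun R i => if i ∈ s \ R then R else {i} with hBfam
  have hcover : Ω.filter (fun ω => (s.image ω).card ≤ q - 1) ⊆
      (s.powersetCard (q - 1)).biUnion (fun R =>
        (Fintype.piFinset (Bfam R)).biUnion (fun σ =>
          Ω.filter (fun ω => ∀ i ∈ s \ R, ω i = ω (σ i)))) := by
    intro ω hω
    rw [mem_filter] at hω
    obtain ⟨hωΩ, hbad⟩ := hω
    obtain ⟨R0, hR0s, hR0card, hR0rep⟩ := exists_section s ω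
    have hR0le : R0.card ≤ q - 1 := hR0card.trans hbad
    obtain ⟨R, hR0R, hRs, hRcard⟩ :=
      Finset.exists_subsuperset_card_eq hR0s hR0le (by omega)
    have hrep : ∀ i ∈ s \ R, ∃ r ∈ R, ω r = ω i := by
      intro i hi
      obtain ⟨r, hr, hgr⟩ := hR0rep i (mem_sdiff.1 hi).1
      exact ⟨r, hR0R hr, hgr⟩
    set σ : I → I := fun i => if h : i ∈ s \ R then (hrep i h).choose else i with hσdef
    rw [mem_biUnion]
    refine ⟨R, mem_powersetCard.2 ⟨hRs, hRcard⟩, ?_⟩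
    rw [mem_biUnion]
    refine ⟨σ, ?_, ?_⟩
    · rw [Fintype.mem_piFinset]
      intro i
      rw [hBfam]
      by_cases hi : i ∈ s \ R
      · simp only [hi, if_true, hσdef, dif_pos hi]
        exact (hrep i hi).choose_spec.1
      · simp only [hi, if_false, hσdef, dif_neg hi, mem_singleton]
    · rw [mem_filter]
      refine ⟨hωΩ, fun i hi => ?_⟩
      rw [hσdef]
      simp only [dif_pos hi]
      exact ((hrep i hi).choose_spec.2).symm
  have hstep : ∀ R ∈ s.powersetCard (q - 1), ∀ σ ∈ Fintype.piFinset (Bfam R),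
      (Ω.filter (fun ω => ∀ i ∈ s \ R, ω i = ω (σ i))).card * t ^ m ≤ Ω.card := by
    intro R hR σ hσ
    rw [mem_powersetCard] at hR
    have hsd : (s \ R).card = m := by
      rw [card_sdiff_of_subset hR.1, hR.2]
    rw [← hsd]
    apply constrained_count L t hL
    intro i hi
    rw [Fintype.mem_piFinset] at hσ
    have := hσ i
    rw [hBfam] at this
    simp only [hi, if_true] at this
    intro hcon
    exact (mem_sdiff.1 hcon).2 this
  have hσcard : ∀ R ∈ s.powersetCard (q - 1),
      (Fintype.piFinset (Bfam R)).card ≤ (q - 1) ^ m := by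
    intro R hR
    rw [mem_powersetCard] at hR
    rw [Fintype.card_piFinset]
    have : ∀ i : I, (Bfam R i).card = if i ∈ s \ R then q - 1 else 1 := by
      intro i
      rw [hBfam]
      by_cases hi : i ∈ s \ R <;> simp [hi, hR.2]
    calc ∏ i : I, (Bfam R i).card = ∏ i : I, (if i ∈ s \ R then q - 1 else 1) := by
          exact prod_congr rfl (fun i _ => this i)
      _ = ∏ i ∈ s \ R, (q - 1) := by
          rw [← prod_filter]
          congr 1
          ext i
          simp
      _ = (q - 1) ^ (s \ R).card := by rw [prod_const]
      _ ≤ (q - 1) ^ m := by rw [card_sdiff_of_subset hR.1, hR.2]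
  calc (Ω.filter (fun ω => (s.image ω).card ≤ q - 1)).card * t ^ m
      ≤ ((s.powersetCard (q - 1)).biUnion (fun R =>
          (Fintype.piFinset (Bfam R)).biUnion (fun σ =>
            Ω.filter (fun ω => ∀ i ∈ s \ R, ω i = ω (σ i))))).card * t ^ m := by
        exact Nat.mul_le_mul_right _ (card_le_card hcover)
    _ ≤ (∑ R ∈ s.powersetCard (q - 1), ∑ σ ∈ Fintype.piFinset (Bfam R),
          (Ω.filter (fun ω => ∀ i ∈ s \ R, ω i = ω (σ i))).card) * t ^ m := by
        apply Nat.mul_le_mul_right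
        calc _ ≤ _ := card_biUnion_le
          _ ≤ _ := sum_le_sum (fun R _ => card_biUnion_le)
    _ = ∑ R ∈ s.powersetCard (q - 1), ∑ σ ∈ Fintype.piFinset (Bfam R),
          (Ω.filter (fun ω => ∀ i ∈ s \ R, ω i = ω (σ i))).card * t ^ m := by
        rw [sum_mul]
        exact sum_congr rfl (fun R _ => sum_mul _ _ _)
    _ ≤ ∑ R ∈ s.powersetCard (q - 1), ∑ σ ∈ Fintype.piFinset (Bfam R), Ω.card := by
        exact sum_le_sum (fun R hR => sum_le_sum (fun σ hσ => hstep R hR σ hσ))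
    _ = ∑ R ∈ s.powersetCard (q - 1), (Fintype.piFinset (Bfam R)).card * Ω.card := by
        exact sum_congr rfl (fun R _ => by rw [sum_const, smul_eq_mul])
    _ ≤ ∑ R ∈ s.powersetCard (q - 1), (q - 1) ^ m * Ω.card := by
        exact sum_le_sum (fun R hR => Nat.mul_le_mul_right _ (hσcard R hR))
    _ = (s.powersetCard (q - 1)).card * ((q - 1) ^ m * Ω.card) := by
        rw [sum_const, smul_eq_mul]
    _ ≤ 2 ^ s.card * ((q - 1) ^ m * Ω.card) := by
        apply Nat.mul_le_mul_right
        calc (s.powersetCard (q - 1)).card ≤ s.powerset.card :=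
              card_le_card (fun x hx => mem_powerset.2 (mem_powersetCard.1 hx).1)
          _ = 2 ^ s.card := card_powerset s
    _ = 2 ^ s.card * (q - 1) ^ m * Ω.card := by ring

end LLLModule



/-- `ι : Fin f ↪ Fin n` is a copy of the `k`-uniform hypergraph `F` (with vertex set
`Fin f` and edge set `Fe`) in the `k`-uniform hypergraph `G` if it maps edges of `F`
to edges of `G`. -/
def IsCopy {f n : ℕ} (Fe : Finset (Finset (Fin f))) (G : Finset (Finset (Fin n)))
    (ι : Fin f ↪ Fin n) : Prop :=
  ∀ e ∈ Fe, e.map ι ∈ G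

/-- `φ` is an `(F,q)`-coloring of `G`: every copy of `F` in `G` receives at least `q`
colors. -/
def IsFQColoring {f n : ℕ} (Fe : Finset (Finset (Fin f))) (G : Finset (Finset (Fin n)))
    (q : ℕ) (φ : Finset (Fin n) → ℕ) : Prop :=
  ∀ ι : Fin f ↪ Fin n, IsCopy Fe G ι →
    q ≤ ((Fe.image (fun e => e.map ι)).image φ).card

/-- The generalized list Ramsey number `r_ℓ(G, F, q)`: the minimum `t` such that for
every assignment of lists of at least `t` colors to the edges of `G`, there is a
coloring from the lists in which every copy of `F` receives at least `q` colors. -/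
noncomputable def listRamseyF {f : ℕ} (Fe : Finset (Finset (Fin f))) (q n : ℕ)
    (G : Finset (Finset (Fin n))) : ℕ :=
  sInf {t | ∀ L : Finset (Fin n) → Finset ℕ, (∀ e ∈ G, t ≤ (L e).card) →
    ∃ φ : Finset (Fin n) → ℕ, (∀ e ∈ G, φ e ∈ L e) ∧ IsFQColoring Fe G q φ}


instance {f n : ℕ} (Fe : Finset (Finset (Fin f))) (G : Finset (Finset (Fin n))) :
    DecidablePred (IsCopy Fe G) :=
  fun _ => decidable_of_iff (∀ e ∈ Fe, _ ∈ G) Iff.rfl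

section App
variable {f n : ℕ} {Fe : Finset (Finset (Fin f))} {G : Finset (Finset (Fin n))}

def suppC (Fe : Finset (Finset (Fin f))) (G : Finset (Finset (Fin n)))
    (j : {ι : Fin f ↪ Fin n // IsCopy Fe G ι}) : Finset {e : Finset (Fin n) // e ∈ G} :=
  Fe.attach.image (fun e => ⟨e.1.map j.1, j.2 e.1 e.2⟩)

lemma card_suppC (j : {ι : Fin f ↪ Fin n // IsCopy Fe G ι}) :
    (suppC Fe G j).card = Fe.card := by
  rw [suppC, card_image_of_injective _ ?_, card_attach]
  intro a b hab
  have h1 : a.1.map j.1 = b.1.map j.1 := congrArg Subtype.val hab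
  exact Subtype.ext (Finset.map_injective j.1 h1)


lemma image_suppC (j : {ι : Fin f ↪ Fin n // IsCopy Fe G ι})
    (ω : {e : Finset (Fin n) // e ∈ G} → ℕ) :
    (suppC Fe G j).image ω
      = (Fe.image (fun e => e.map j.1)).image
          (fun e => if h : e ∈ G then ω ⟨e, h⟩ else 0) := by
  ext c
  constructor
  · intro hc
    rw [mem_image] at hc
    obtain ⟨i, hi, hic⟩ := hc
    rw [suppC, mem_image] at hi
    obtain ⟨e, _, hei⟩ := hi
    rw [mem_image]
    refine ⟨e.1.map j.1, mem_image_of_mem _ e.2, ?_⟩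
    rw [dif_pos (j.2 e.1 e.2), ← hic, ← hei]
  · intro hc
    rw [mem_image] at hc
    obtain ⟨d, hd, hdc⟩ := hc
    rw [mem_image] at hd
    obtain ⟨e, he, hed⟩ := hd
    subst hed
    rw [dif_pos (j.2 e he)] at hdc
    rw [mem_image]
    refine ⟨⟨e.map j.1, j.2 e he⟩, ?_, hdc⟩
    rw [suppC, mem_image]
    exact ⟨⟨e, he⟩, mem_attach _ _, rfl⟩


lemma copy_nbr_card (k : ℕ) (hFk : ∀ e ∈ Fe, e.card = k)
    (j : {ι : Fin f ↪ Fin n // IsCopy Fe G ι}) :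
    (univ.filter (fun j' : {ι : Fin f ↪ Fin n // IsCopy Fe G ι} =>
        ¬ Disjoint (suppC Fe G j) (suppC Fe G j'))).card
      ≤ Fe.card * (f ^ k * n ^ (f - k)) := by
  classical
  set Vj : Finset (Fin n) := (Fe.biUnion id).image j.1 with hVj
  have hVjcard : Vj.card ≤ f := by
    calc Vj.card ≤ (Fe.biUnion id).card := card_image_le
      _ ≤ Fintype.card (Fin f) := card_le_univ _
      _ = f := Fintype.card_fin f
  have hcover : (univ.filter (fun j' : {ι : Fin f ↪ Fin n // IsCopy Fe G ι} =>
        ¬ Disjoint (suppC Fe G j) (suppC Fe G j')))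
      ⊆ Fe.attach.biUnion (fun e' => univ.filter
          (fun j' : {ι : Fin f ↪ Fin n // IsCopy Fe G ι} => ∀ v ∈ e'.1, j'.1 v ∈ Vj)) := by
    intro j' hj'
    rw [mem_filter] at hj'
    obtain ⟨i, hi1, hi2⟩ := Finset.not_disjoint_iff.1 hj'.2
    rw [suppC, mem_image] at hi1 hi2
    obtain ⟨e, _, he⟩ := hi1
    obtain ⟨e', he'mem, he'⟩ := hi2
    rw [mem_biUnion]
    refine ⟨e', mem_attach _ _, mem_filter.2 ⟨mem_univ _, ?_⟩⟩
    intro v hv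
    have hmap : e'.1.map j'.1 = e.1.map j.1 := congrArg Subtype.val (he'.trans he.symm)
    have hvin : j'.1 v ∈ e.1.map j.1 := by
      rw [← hmap]
      exact Finset.mem_map_of_mem _ hv
    rw [Finset.mem_map] at hvin
    obtain ⟨u, hu, huv⟩ := hvin
    rw [hVj, mem_image]
    exact ⟨u, mem_biUnion.2 ⟨e.1, e.2, hu⟩, huv⟩
  calc _ ≤ _ := card_le_card hcover
    _ ≤ ∑ e' ∈ Fe.attach, (univ.filter
          (fun j' : {ι : Fin f ↪ Fin n // IsCopy Fe G ι} => ∀ v ∈ e'.1, j'.1 v ∈ Vj)).card :=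
        card_biUnion_le
    _ ≤ ∑ e' ∈ Fe.attach, f ^ k * n ^ (f - k) := by
        apply sum_le_sum
        intro e' _
        have hcard : (univ.filter
            (fun j' : {ι : Fin f ↪ Fin n // IsCopy Fe G ι} => ∀ v ∈ e'.1, j'.1 v ∈ Vj)).card
            ≤ (Fintype.piFinset (fun v : Fin f => if v ∈ e'.1 then Vj else univ)).card := by
          apply card_le_card_of_injOn (fun j' => (j'.1 : Fin f → Fin n))
          · intro j' hj'
            rw [mem_coe, Fintype.mem_piFinset]
            intro v
            rw [mem_coe, mem_filter] at hj'
            by_cases hv : v ∈ e'.1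
            · simp only [hv, if_true]
              exact hj'.2 v hv
            · simp [hv]
          · intro a _ b _ hab
            exact Subtype.ext (DFunLike.coe_injective hab)
        apply hcard.trans
        rw [Fintype.card_piFinset]
        have h1 : (univ.filter (· ∈ e'.1)).card = k := by
          rw [filter_univ_mem]
          exact hFk e'.1 e'.2
        have h2 : (univ.filter (fun v => ¬ v ∈ e'.1)).card = f - k := by
          have := card_filter_add_card_filter_not (s := (univ : Finset (Fin f)))
            (p := (· ∈ e'.1))
          rw [h1] at this
          simp only [card_univ, Fintype.card_fin] at this
          omega
        calc ∏ v : Fin f, (if v ∈ e'.1 then Vj else univ).card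
            = (∏ v ∈ univ.filter (· ∈ e'.1),
                (if v ∈ e'.1 then Vj else (univ : Finset (Fin n))).card)
              * ∏ v ∈ univ.filter (fun v => ¬ v ∈ e'.1),
                (if v ∈ e'.1 then Vj else (univ : Finset (Fin n))).card :=
              (prod_filter_mul_prod_filter_not univ (· ∈ e'.1) _).symm
          _ = Vj.card ^ k * n ^ (f - k) := by
              congr 1
              · rw [prod_congr rfl (fun v hv => by rw [if_pos (mem_filter.1 hv).2]),
                  prod_const, h1]
              · rw [prod_congr rfl (fun v hv => by rw [if_neg (mem_filter.1 hv).2]),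
                  prod_const, h2, card_univ, Fintype.card_fin]
          _ ≤ f ^ k * n ^ (f - k) := Nat.mul_le_mul_right _ (Nat.pow_le_pow_left hVjcard k)
    _ = Fe.card * (f ^ k * n ^ (f - k)) := by rw [sum_const, card_attach, smul_eq_mul]

/-- The main LLL application: a coloring avoiding all bad events exists. -/
lemma exists_coloring (k q t : ℕ) (hFk : ∀ e ∈ Fe, e.card = k)
    (hq : 1 ≤ q) (hqE : q ≤ Fe.card) (ht1 : 1 ≤ t)
    (harith : 4 * (2 ^ Fe.card * Fe.card ^ (Fe.card - (q - 1)))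
        * (Fe.card * (f ^ k * n ^ (f - k)) + 1) ≤ t ^ (Fe.card - (q - 1)))
    (L : Finset (Fin n) → Finset ℕ) (hL : ∀ e ∈ G, t ≤ (L e).card) :
    ∃ φ : Finset (Fin n) → ℕ, (∀ e ∈ G, φ e ∈ L e) ∧ IsFQColoring Fe G q φ := by
  have hE1 : 1 ≤ Fe.card := le_trans hq hqE
  set E := Fe.card with hE
  set s := E - (q - 1) with hs
  set c1 := 2 ^ E * E ^ s with hc1
  set Dn : ℕ := E * (f ^ k * n ^ (f - k)) + 1 with hDn
  have htR : (1 : ℝ) ≤ (t : ℝ) := by exact_mod_cast ht1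
  have htpos : (0 : ℝ) < (t : ℝ) ^ s := by positivity
  set L' : {e : Finset (Fin n) // e ∈ G} → Finset ℕ := fun i => L i.1 with hL'
  have hL'card : ∀ i, t ≤ (L' i).card := fun i => hL i.1 i.2
  have hobtain := lll L'
    (fun (j : {ι : Fin f ↪ Fin n // IsCopy Fe G ι}) ω =>
      ((suppC Fe G j).image ω).card ≤ q - 1)
    (suppC Fe G)
    (fun j a b hab => by
      show ((suppC Fe G j).image a).card ≤ q - 1 ↔ ((suppC Fe G j).image b).card ≤ q - 1
      rw [image_congr (fun i hi => hab i (mem_coe.1 hi))])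
    (fun i => card_pos.1 (lt_of_lt_of_le ht1 (hL'card i)))
    ((c1 : ℝ) / (t : ℝ) ^ s) ((Dn : ℕ) : ℝ)
    (div_nonneg (Nat.cast_nonneg c1) (le_of_lt htpos))
    (by exact_mod_cast Nat.le_add_left 1 (E * (f ^ k * n ^ (f - k))))
    ?_ ?_ ?_
  · obtain ⟨ω, hωΩ, hωgood⟩ := hobtain
    refine ⟨fun e => if h : e ∈ G then ω ⟨e, h⟩ else 0, ?_, ?_⟩
    · intro e he
      simp only [dif_pos he]
      rw [Fintype.mem_piFinset] at hωΩ
      exact hωΩ ⟨e, he⟩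
    · intro ι hι
      have hbad : ¬ ((suppC Fe G ⟨ι, hι⟩).image ω).card ≤ q - 1 := hωgood ⟨ι, hι⟩
      rw [image_suppC ⟨ι, hι⟩ ω,
        show ((⟨ι, hι⟩ : {ι : Fin f ↪ Fin n // IsCopy Fe G ι}) : Fin f ↪ Fin n) = ι
          from rfl] at hbad
      omega
  · -- probability bound
    intro j
    have hb := bad_count L' t hL'card (suppC Fe G j) q hq
      (by rw [card_suppC]; exact hqE)
    rw [card_suppC] at hb
    have hq1E : q - 1 ≤ E := by omega
    have hb2 : ((Fintype.piFinset L').filter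
        (fun ω => ((suppC Fe G j).image ω).card ≤ q - 1)).card * t ^ s
        ≤ c1 * (Fintype.piFinset L').card :=
      le_trans hb (Nat.mul_le_mul_right _
        (Nat.mul_le_mul_left _ (Nat.pow_le_pow_left hq1E s)))
    rw [div_mul_eq_mul_div, le_div_iff₀ htpos]
    calc (((Fintype.piFinset L').filter
          (fun ω => ((suppC Fe G j).image ω).card ≤ q - 1)).card : ℝ) * (t : ℝ) ^ s
        = ((((Fintype.piFinset L').filter
            (fun ω => ((suppC Fe G j).image ω).card ≤ q - 1)).card * t ^ s : ℕ) : ℝ) := by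
          push_cast; ring
      _ ≤ ((c1 * (Fintype.piFinset L').card : ℕ) : ℝ) := by exact_mod_cast hb2
      _ = (c1 : ℝ) * (Fintype.piFinset L').card := by push_cast; ring
  · -- neighbour bound
    intro j
    have h := copy_nbr_card k hFk j
    have h2 : (univ.filter (fun j' : {ι : Fin f ↪ Fin n // IsCopy Fe G ι} =>
        ¬ Disjoint (suppC Fe G j) (suppC Fe G j'))).card ≤ Dn :=
      le_trans h (Nat.le_succ _)
    exact_mod_cast h2
  · -- LLL condition
    have h4 : 4 * ((c1 : ℝ) / (t : ℝ) ^ s) * ((Dn : ℕ) : ℝ)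
        = (4 * (c1 : ℝ) * ((Dn : ℕ) : ℝ)) / (t : ℝ) ^ s := by ring
    rw [h4, div_le_one htpos]
    calc 4 * (c1 : ℝ) * ((Dn : ℕ) : ℝ) = ((4 * c1 * Dn : ℕ) : ℝ) := by push_cast; ring
      _ ≤ ((t ^ s : ℕ) : ℝ) := by exact_mod_cast harith
      _ = (t : ℝ) ^ s := by push_cast; ring

end App

/-- Theorem 1.5: for fixed `k`-uniform `F` with `|V(F)| > k` and
`1 ≤ q ≤ |E(F)|`, there is `C` such that for every `k`-uniform `G` on `n` vertices,
`r_ℓ(G, F, q) ≤ C · n^{(|V(F)|-k)/(|E(F)|-q+1)}`. -/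
theorem stmt9 (k f q : ℕ) (hk : 2 ≤ k) (Fe : Finset (Finset (Fin f)))
    (hFk : ∀ e ∈ Fe, e.card = k) (hf : k < f) (hq : 1 ≤ q) (hqE : q ≤ Fe.card) :
    ∃ C : ℝ, 0 < C ∧ ∀ n : ℕ, ∀ G : Finset (Finset (Fin n)), (∀ e ∈ G, e.card = k) →
      (listRamseyF Fe q n G : ℝ) ≤
        C * (n : ℝ) ^ (((f : ℝ) - k) / ((Fe.card : ℝ) - q + 1)) := by
  have hE1 : 1 ≤ Fe.card := le_trans hq hqE
  set E := Fe.card with hE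
  set s := E - (q - 1) with hs
  have hs1 : 1 ≤ s := by omega
  set c1 := 2 ^ E * E ^ s with hc1
  have hc1pos : 1 ≤ c1 := Nat.one_le_iff_ne_zero.2 (by positivity)
  set K := 8 * c1 * E * f ^ k with hK
  have hfpos : 0 < f := by omega
  have hK1 : 1 ≤ K := Nat.one_le_iff_ne_zero.2 (by positivity)
  refine ⟨2 * K, by positivity, ?_⟩
  intro n G hG
  set α := ((f : ℝ) - k) / ((E : ℝ) - q + 1) with hα
  have hsR : ((s : ℕ) : ℝ) = (E : ℝ) - q + 1 := by
    have h1 : q - 1 ≤ E := by omega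
    rw [hs, Nat.cast_sub h1, Nat.cast_sub hq]
    push_cast
    ring
  have hsRpos : (0 : ℝ) < (E : ℝ) - q + 1 := by
    rw [← hsR]
    exact_mod_cast hs1
  have hαpos : 0 < α := by
    apply div_pos _ hsRpos
    have : (k : ℝ) < f := by exact_mod_cast hf
    linarith
  by_cases hn0 : n = 0
  · subst hn0
    have hmem : (0 : ℕ) ∈ {t | ∀ L : Finset (Fin 0) → Finset ℕ,
        (∀ e ∈ G, t ≤ (L e).card) →
        ∃ φ : Finset (Fin 0) → ℕ, (∀ e ∈ G, φ e ∈ L e) ∧ IsFQColoring Fe G q φ} := by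
      intro L _
      refine ⟨fun _ => 0, ?_, ?_⟩
      · intro e he
        exfalso
        have h1 := hG e he
        have h2 : e.card ≤ 0 := by
          calc e.card ≤ Fintype.card (Fin 0) := card_le_univ e
            _ = 0 := Fintype.card_fin 0
        omega
      · intro ι _
        exact (ι ⟨0, hfpos⟩).elim0
    have h0 : listRamseyF Fe q 0 G = 0 := Nat.le_zero.mp (Nat.sInf_le hmem)
    rw [h0]
    rw [Nat.cast_zero, Real.zero_rpow (ne_of_gt hαpos), mul_zero]
  · have hn1 : 1 ≤ n := Nat.one_le_iff_ne_zero.2 hn0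
    set m := max 1 ⌈(n : ℝ) ^ α⌉₊ with hm
    have hm1 : 1 ≤ m := le_max_left _ _
    set t := K * m with ht
    have ht1 : 1 ≤ t := by
      calc 1 = 1 * 1 := by norm_num
        _ ≤ K * m := Nat.mul_le_mul hK1 hm1
    have hkey : n ^ (f - k) ≤ m ^ s := by
      have hmge : (n : ℝ) ^ α ≤ (m : ℝ) := by
        calc (n : ℝ) ^ α ≤ (⌈(n : ℝ) ^ α⌉₊ : ℝ) := Nat.le_ceil _
          _ ≤ (m : ℝ) := by exact_mod_cast le_max_right 1 _
      have hnn : (0 : ℝ) ≤ (n : ℝ) ^ α := Real.rpow_nonneg (Nat.cast_nonneg n) α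
      have h1 : ((n : ℝ)) ^ ((f - k : ℕ) : ℝ) ≤ (m : ℝ) ^ ((s : ℕ) : ℝ) := by
        have hexp : α * ((s : ℕ) : ℝ) = ((f - k : ℕ) : ℝ) := by
          rw [hα, hsR, Nat.cast_sub (le_of_lt hf)]
          field_simp
        calc ((n : ℝ)) ^ ((f - k : ℕ) : ℝ) = ((n : ℝ) ^ α) ^ ((s : ℕ) : ℝ) := by
              rw [← Real.rpow_mul (Nat.cast_nonneg n), hexp]
          _ ≤ (m : ℝ) ^ ((s : ℕ) : ℝ) :=
              Real.rpow_le_rpow hnn hmge (Nat.cast_nonneg s)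
      rw [Real.rpow_natCast, Real.rpow_natCast] at h1
      exact_mod_cast h1
    have harith : 4 * c1 * (E * (f ^ k * n ^ (f - k)) + 1) ≤ t ^ s := by
      have hfk1 : 1 ≤ f ^ k := Nat.one_le_pow _ _ hfpos
      have hms1 : 1 ≤ m ^ s := Nat.one_le_pow _ _ (by omega)
      calc 4 * c1 * (E * (f ^ k * n ^ (f - k)) + 1)
          = 4 * c1 * E * f ^ k * n ^ (f - k) + 4 * c1 := by ring
        _ ≤ 4 * c1 * E * f ^ k * m ^ s + 4 * c1 * (E * (f ^ k * m ^ s)) := by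
            apply Nat.add_le_add
            · exact Nat.mul_le_mul_left _ hkey
            · exact Nat.le_mul_of_pos_right _ (by positivity)
        _ = (8 * c1 * E * f ^ k) * m ^ s := by ring
        _ ≤ (8 * c1 * E * f ^ k) ^ s * m ^ s :=
            Nat.mul_le_mul_right _ (Nat.le_self_pow (by omega) _)
        _ = ((8 * c1 * E * f ^ k) * m) ^ s := (mul_pow _ _ _).symm
        _ = t ^ s := rfl
    have hmem : t ∈ {t | ∀ L : Finset (Fin n) → Finset ℕ,
        (∀ e ∈ G, t ≤ (L e).card) →
        ∃ φ : Finset (Fin n) → ℕ, (∀ e ∈ G, φ e ∈ L e) ∧ IsFQColoring Fe G q φ} :=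
      fun L hL => exists_coloring k q t hFk hq hqE ht1 harith L hL
    have hle : listRamseyF Fe q n G ≤ t := Nat.sInf_le hmem
    have hnα1 : (1 : ℝ) ≤ (n : ℝ) ^ α := by
      have h1n : (1 : ℝ) ≤ (n : ℝ) := by exact_mod_cast hn1
      calc (1 : ℝ) = (1 : ℝ) ^ α := (Real.one_rpow α).symm
        _ ≤ (n : ℝ) ^ α := Real.rpow_le_rpow (by norm_num) h1n (le_of_lt hαpos)
    have hmle : (m : ℝ) ≤ 2 * (n : ℝ) ^ α := by
      rw [hm]
      push_cast [Nat.cast_max]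
      apply max_le
      · linarith
      · have := Nat.ceil_lt_add_one (Real.rpow_nonneg (Nat.cast_nonneg n) α)
        linarith [this]
    calc (listRamseyF Fe q n G : ℝ) ≤ (t : ℝ) := by exact_mod_cast hle
      _ = (K : ℝ) * (m : ℝ) := by rw [ht]; push_cast; ring
      _ ≤ (K : ℝ) * (2 * (n : ℝ) ^ α) :=
          mul_le_mul_of_nonneg_left hmle (Nat.cast_nonneg K)
      _ = 2 * (K : ℝ) * (n : ℝ) ^ α := by ring
      _ = 2 * (K : ℝ) * (n : ℝ) ^ (((f : ℝ) - k) / ((E : ℝ) - q + 1)) := by rw [hα]
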